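/- For every dimension d ≥ 1, every integer l ≥ 0 and every ρ ∈ (0,1] there exists a constant C > 0 with the following property: for every ρ-shape-regular simplex τ ⊆ ℝ^d with diameter h_τ, and every real polynomial q in d variables of total degree at most l whose associated polynomial function vanishes at one of the d+1 vertices of τ, one has ∫_τ q(x)² dx ≤ C² · h_τ² · ∫_τ ‖∇q(x)‖² dx, where ∇q denotes the gradient of the polynomial function x ↦ q(x) and ‖·‖ is the Euclidean norm on ℝ^d; equivalently ‖q‖_{L²(τ)} ≤ C h_τ ‖∇q‖_{L²(τ)}. -/

import Mathlib

open MeasureTheory Metric MvPolynomial InnerProductSpace Topology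

noncomputable section PoincareAux

namespace PoincareSimplexAux

variable {d : ℕ}

/-- The vector of partial derivatives of a polynomial, as a Euclidean vector. -/
def pgrad (q : MvPolynomial (Fin d) ℝ) (x : EuclideanSpace ℝ (Fin d)) :
    EuclideanSpace ℝ (Fin d) := WithLp.toLp 2 fun j => eval x (pderiv j q)

lemma totalDegree_pderiv_le (q : MvPolynomial (Fin d) ℝ) (i : Fin d) :
    (pderiv i q).totalDegree ≤ q.totalDegree := by
  conv_lhs => rw [q.as_sum]
  rw [map_sum]
  refine (totalDegree_finset_sum _ _).trans (Finset.sup_le fun m hm => ?_)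
  rw [pderiv_monomial]
  refine (totalDegree_monomial_le _ _).trans ?_
  refine le_trans ?_ (le_totalDegree hm)
  exact Finsupp.sum_le_sum_index tsub_le_self (fun _ _ => monotone_id) (fun _ _ => rfl)

lemma toDual_single (i : Fin d) :
    toDual ℝ (EuclideanSpace ℝ (Fin d)) (EuclideanSpace.single i (1:ℝ)) =
      EuclideanSpace.proj i := by
  ext v
  rw [toDual_apply_apply, EuclideanSpace.inner_single_left]
  simp

lemma hasFDerivAt_eval (q : MvPolynomial (Fin d) ℝ) (x : EuclideanSpace ℝ (Fin d)) :
    HasFDerivAt (fun y : EuclideanSpace ℝ (Fin d) => eval y q)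
      (toDual ℝ (EuclideanSpace ℝ (Fin d)) (pgrad q x)) x := by
  induction q using MvPolynomial.induction_on with
  | C a =>
      have h0 : pgrad (C a : MvPolynomial (Fin d) ℝ) x = 0 := by
        ext j; simp [pgrad, pderiv_C]
      rw [h0, map_zero]
      simpa using hasFDerivAt_const (𝕜 := ℝ) a x
  | add p r hp hr =>
      have h0 : pgrad (p + r) x = pgrad p x + pgrad r x := by
        ext j; simp [pgrad]
      rw [h0, map_add]
      exact (hp.add hr).congr_fderiv rfl |>.congr_of_eventuallyEq
        (by filter_upwards with y; simp)
  | mul_X p i hp =>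
      have hi : HasFDerivAt (fun y : EuclideanSpace ℝ (Fin d) => y i)
          (EuclideanSpace.proj i : EuclideanSpace ℝ (Fin d) →L[ℝ] ℝ) x :=
        (EuclideanSpace.proj i : EuclideanSpace ℝ (Fin d) →L[ℝ] ℝ).hasFDerivAt
      have key : pgrad (p * X i) x =
          x i • pgrad p x + eval x p • EuclideanSpace.single i (1:ℝ) := by
        ext j
        classical
        simp only [pgrad, pderiv_mul, pderiv_X, map_add, map_mul, PiLp.add_apply,
          PiLp.smul_apply, smul_eq_mul, EuclideanSpace.single_apply, Pi.single_apply]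
        by_cases hij : i = j
        · subst hij; simp [mul_comm]
        · have hji : ¬ j = i := fun h => hij h.symm
          simp only [if_neg hji, if_neg hij, eval_X, map_zero, mul_zero, add_zero]
          ring
      have h2 := hp.mul hi
      have h3 : HasFDerivAt (fun y : EuclideanSpace ℝ (Fin d) => eval y (p * X i))
          ((eval x p • EuclideanSpace.proj i +
            x i • toDual ℝ (EuclideanSpace ℝ (Fin d)) (pgrad p x))) x :=
        h2.congr_of_eventuallyEq (by filter_upwards with y; simp)
      rw [key, map_add, _root_.map_smul, _root_.map_smul, toDual_single]
      rw [add_comm]; exact h3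

lemma gradient_eval (q : MvPolynomial (Fin d) ℝ) (x : EuclideanSpace ℝ (Fin d)) :
    gradient (fun y : EuclideanSpace ℝ (Fin d) => eval y q) x = pgrad q x := by
  have h := (hasFDerivAt_eval q x).hasGradientAt
  rw [LinearIsometryEquiv.symm_apply_apply] at h
  exact h.gradient

lemma continuous_evalE (q : MvPolynomial (Fin d) ℝ) :
    Continuous (fun y : EuclideanSpace ℝ (Fin d) => eval y q) :=
  Differentiable.continuous (fun x => (hasFDerivAt_eval q x).differentiableAt)

lemma norm_pgrad_sq (q : MvPolynomial (Fin d) ℝ) (x : EuclideanSpace ℝ (Fin d)) :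
    ‖pgrad q x‖^2 = ∑ j, (eval x (pderiv j q))^2 := by
  rw [EuclideanSpace.norm_eq, Real.sq_sqrt (by positivity)]
  simp [pgrad, sq_abs]

lemma eval_eq_zero_of_ball {p : MvPolynomial (Fin d) ℝ} {r : ℝ} (hr : 0 < r)
    (h : ∀ x ∈ ball (0 : EuclideanSpace ℝ (Fin d)) r, eval x p = 0) : p = 0 := by
  have hA : AnalyticOnNhd ℝ (fun x : EuclideanSpace ℝ (Fin d) => eval x p) Set.univ :=
    AnalyticOnNhd.eval_continuousLinearMap
      ((PiLp.continuousLinearEquiv 2 ℝ (fun _ : Fin d => ℝ) :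
          EuclideanSpace ℝ (Fin d) ≃L[ℝ] (Fin d → ℝ)) :
        EuclideanSpace ℝ (Fin d) →L[ℝ] (Fin d → ℝ)) p
  have h0 : (fun x : EuclideanSpace ℝ (Fin d) => eval x p)
      =ᶠ[𝓝 (0 : EuclideanSpace ℝ (Fin d))] 0 :=
    Filter.eventuallyEq_of_mem (ball_mem_nhds (0 : EuclideanSpace ℝ (Fin d)) hr) h
  have hz := hA.eqOn_zero_of_preconnected_of_eventuallyEq_zero
    isPreconnected_univ (Set.mem_univ (0 : EuclideanSpace ℝ (Fin d))) h0
  refine MvPolynomial.funext fun x => ?_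
  have := hz (Set.mem_univ (WithLp.toLp 2 x : EuclideanSpace ℝ (Fin d)))
  simpa using this

lemma aeval_eq_evalR (f : Fin d → ℝ) (p : MvPolynomial (Fin d) ℝ) : aeval f p = eval f p := by
  rw [aeval_def, Algebra.algebraMap_self]
  rfl

lemma eval_bind₁E (z : EuclideanSpace ℝ (Fin d)) (h : ℝ) (q : MvPolynomial (Fin d) ℝ)
    (u : EuclideanSpace ℝ (Fin d)) :
    eval u (bind₁ (fun j : Fin d => C (z j) + C h * X j) q) = eval (z + h • u) q := by
  rw [← aeval_eq_evalR, aeval_bind₁, ← aeval_eq_evalR]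
  have hfun : (fun i : Fin d => aeval (R := ℝ) (S₁ := ℝ) u (C (z i) + C h * X i)) =
      fun i => (z + h • u) i := by
    funext i
    simp only [map_add, map_mul, aeval_C, aeval_X, Algebra.algebraMap_self, RingHom.id_apply]
    rfl
  rw [hfun]

lemma totalDegree_bind₁_le (s : Fin d → MvPolynomial (Fin d) ℝ)
    (hs : ∀ i, (s i).totalDegree ≤ 1) (q : MvPolynomial (Fin d) ℝ) :
    (bind₁ s q).totalDegree ≤ q.totalDegree := by
  conv_lhs => rw [q.as_sum, map_sum]
  refine (totalDegree_finset_sum _ _).trans (Finset.sup_le fun m hm => ?_)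
  rw [bind₁_monomial]
  refine (totalDegree_mul _ _).trans ?_
  rw [totalDegree_C, zero_add]
  refine (totalDegree_finset_prod _ _).trans ?_
  refine le_trans ?_ (le_totalDegree hm)
  rw [Finsupp.sum]
  refine Finset.sum_le_sum fun j _ => ?_
  calc (s j ^ m j).totalDegree ≤ m j * (s j).totalDegree := totalDegree_pow _ _
    _ ≤ m j * 1 := Nat.mul_le_mul_left _ (hs j)
    _ = m j := Nat.mul_one _

set_option maxHeartbeats 2000000 in
lemma pderiv_subst (z : EuclideanSpace ℝ (Fin d)) {h : ℝ} (q : MvPolynomial (Fin d) ℝ)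
    (u : EuclideanSpace ℝ (Fin d)) (j : Fin d) :
    eval u (pderiv j (bind₁ (fun j : Fin d => C (z j) + C h * X j) q)) =
      h * eval (z + h • u) (pderiv j q) := by
  set s : Fin d → MvPolynomial (Fin d) ℝ := fun j => C (z j) + C h * X j with hs
  have h1 := hasFDerivAt_eval (bind₁ s q) u
  have haff : HasFDerivAt (fun u : EuclideanSpace ℝ (Fin d) => z + h • u)
      (h • ContinuousLinearMap.id ℝ (EuclideanSpace ℝ (Fin d))) u :=
    ((hasFDerivAt_id u).const_smul h).const_add z
  have h2 := (hasFDerivAt_eval q (z + h • u)).comp u haff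
  have h3 : (fun w : EuclideanSpace ℝ (Fin d) => eval w (bind₁ s q)) =
      (fun y : EuclideanSpace ℝ (Fin d) => eval y q) ∘
        (fun w : EuclideanSpace ℝ (Fin d) => z + h • w) :=
    funext fun w => eval_bind₁E z h q w
  rw [h3] at h1
  have huniq := h1.unique h2
  have happ := congrArg (fun L : (EuclideanSpace ℝ (Fin d)) →L[ℝ] ℝ =>
    L (EuclideanSpace.single j (1:ℝ))) huniq
  simp only [ContinuousLinearMap.comp_apply, ContinuousLinearMap.smul_apply,
    ContinuousLinearMap.id_apply, toDual_apply_apply, real_inner_smul_right] at happ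
  rw [EuclideanSpace.inner_single_right, EuclideanSpace.inner_single_right] at happ
  simpa [pgrad] using happ

lemma cov (z : EuclideanSpace ℝ (Fin d)) {h : ℝ} (hh : 0 < h) {r : ℝ}
    (g : EuclideanSpace ℝ (Fin d) → ℝ) :
    ∫ x in closedBall z (h * r), g x
      = h ^ d * ∫ u in closedBall (0 : EuclideanSpace ℝ (Fin d)) r, g (z + h • u) := by
  have himg : (fun u : EuclideanSpace ℝ (Fin d) => z + h • u) ''
      closedBall (0 : EuclideanSpace ℝ (Fin d)) r = closedBall z (h * r) := by
    ext x
    simp only [Set.mem_image, mem_closedBall, dist_eq_norm, sub_zero]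
    constructor
    · rintro ⟨u, hu, rfl⟩
      rw [add_sub_cancel_left, norm_smul, Real.norm_eq_abs, abs_of_pos hh]
      exact mul_le_mul_of_nonneg_left hu hh.le
    · intro hx
      refine ⟨h⁻¹ • (x - z), ?_, ?_⟩
      · rw [norm_smul, Real.norm_eq_abs, abs_of_pos (inv_pos.mpr hh)]
        rw [inv_mul_le_iff₀ hh]
        exact hx
      · rw [smul_smul, mul_inv_cancel₀ hh.ne', one_smul]
        abel
  have hder : ∀ u ∈ closedBall (0 : EuclideanSpace ℝ (Fin d)) r,
      HasFDerivWithinAt (fun u : EuclideanSpace ℝ (Fin d) => z + h • u)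
      (h • (ContinuousLinearMap.id ℝ (EuclideanSpace ℝ (Fin d))))
      (closedBall (0 : EuclideanSpace ℝ (Fin d)) r) u :=
    fun u _ => (((hasFDerivAt_id u).const_smul h).const_add z).hasFDerivWithinAt
  have hinj : Set.InjOn (fun u : EuclideanSpace ℝ (Fin d) => z + h • u)
      (closedBall (0 : EuclideanSpace ℝ (Fin d)) r) := by
    intro a _ b _ hab
    exact smul_right_injective _ hh.ne' (add_left_cancel hab)
  have hcov := integral_image_eq_integral_abs_det_fderiv_smul volume
    (measurableSet_closedBall) hder hinj g
  rw [himg] at hcov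
  rw [hcov]
  have hdet : (h • ContinuousLinearMap.id ℝ (EuclideanSpace ℝ (Fin d))).det = h ^ d := by
    rw [ContinuousLinearMap.det]
    have hco : ((h • ContinuousLinearMap.id ℝ (EuclideanSpace ℝ (Fin d)) :
        EuclideanSpace ℝ (Fin d) →L[ℝ] EuclideanSpace ℝ (Fin d)) :
        EuclideanSpace ℝ (Fin d) →ₗ[ℝ] EuclideanSpace ℝ (Fin d)) = h • LinearMap.id := by
      ext v; simp
    rw [hco, LinearMap.det_smul, finrank_euclideanSpace_fin, LinearMap.det_id, mul_one]
  simp only [hdet, abs_of_pos (pow_pos hh d), smul_eq_mul]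
  rw [integral_const_mul]

set_option synthInstance.maxHeartbeats 1000000 in
set_option maxHeartbeats 1000000 in
lemma crux (l : ℕ) {ρ : ℝ} (hρ : 0 < ρ) :
    ∃ K : ℝ, 0 < K ∧ ∀ p : MvPolynomial (Fin d) ℝ, p.totalDegree ≤ l →
      ∀ x ∈ closedBall (0 : EuclideanSpace ℝ (Fin d)) 1,
        (eval x p)^2 ≤ K * ∫ y in closedBall (0 : EuclideanSpace ℝ (Fin d)) ρ, (eval y p)^2 := by
  classical
  set W := restrictTotalDegree (Fin d) ℝ l with hW
  set n := Module.finrank ℝ W with hn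
  let b : Module.Basis (Fin n) ℝ W := Module.finBasis ℝ W
  set g : Fin n → EuclideanSpace ℝ (Fin d) → ℝ :=
    fun i y => eval y ((b i : MvPolynomial (Fin d) ℝ)) with hg
  have hgc : ∀ i, Continuous (g i) := fun i => continuous_evalE _
  have key : ∀ (c : Fin n → ℝ) (y : EuclideanSpace ℝ (Fin d)),
      eval y ((b.equivFun.symm c : W) : MvPolynomial (Fin d) ℝ) = ∑ i, c i * g i y := by
    intro c y
    rw [Module.Basis.equivFun_symm_apply]
    rw [Submodule.coe_sum]
    rw [map_sum]
    exact Finset.sum_congr rfl fun i _ => by rw [SetLike.val_smul, smul_eval]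
  have hgint : ∀ i j, IntegrableOn (fun y => g i y * g j y)
      (closedBall (0 : EuclideanSpace ℝ (Fin d)) ρ) volume :=
    fun i j => ((hgc i).mul (hgc j)).continuousOn.integrableOn_compact (isCompact_closedBall _ _)
  set G : (Fin n → ℝ) → ℝ :=
    fun c => ∫ y in closedBall (0 : EuclideanSpace ℝ (Fin d)) ρ, (∑ i, c i * g i y)^2 with hG
  have hGformula : ∀ c, G c =
      ∑ i, ∑ j, (c i * c j) *
        ∫ y in closedBall (0 : EuclideanSpace ℝ (Fin d)) ρ, g i y * g j y := by
    intro c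
    have hpt : ∀ y : EuclideanSpace ℝ (Fin d),
        (∑ i, c i * g i y)^2 = ∑ i, ∑ j, (c i * c j) * (g i y * g j y) := by
      intro y
      rw [sq, Finset.sum_mul_sum]
      exact Finset.sum_congr rfl fun i _ => Finset.sum_congr rfl fun j _ => by ring
    rw [hG]
    simp only [hpt]
    rw [integral_finset_sum _ (fun i _ => integrable_finset_sum _
      (fun j _ => ((hgint i j).const_mul _)))]
    exact Finset.sum_congr rfl fun i _ => by
      rw [integral_finset_sum _ (fun j _ => ((hgint i j).const_mul _))]
      exact Finset.sum_congr rfl fun j _ => integral_const_mul _ _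
  have hGcont : Continuous G := by
    have hfo : G = fun c => ∑ i, ∑ j, (c i * c j) *
        ∫ y in closedBall (0 : EuclideanSpace ℝ (Fin d)) ρ, g i y * g j y := funext hGformula
    rw [hfo]
    exact continuous_finset_sum _ fun i _ => continuous_finset_sum _ fun j _ =>
      (((continuous_apply i).mul (continuous_apply j)).mul continuous_const)
  have hGhom : ∀ (t : ℝ) (c : Fin n → ℝ), G (t • c) = t^2 * G c := by
    intro t c
    rw [hG]
    simp only [Pi.smul_apply, smul_eq_mul]
    have hpt : ∀ y : EuclideanSpace ℝ (Fin d),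
        (∑ i, (t * c i) * g i y)^2 = t^2 * (∑ i, c i * g i y)^2 := by
      intro y
      simp_rw [mul_assoc]
      rw [← Finset.mul_sum]
      ring
    simp only [hpt]
    exact integral_const_mul _ _
  have hGnonneg : ∀ c, 0 ≤ G c :=
    fun c => setIntegral_nonneg measurableSet_closedBall (fun y _ => sq_nonneg _)
  have hGpos : ∀ c : Fin n → ℝ, c ≠ 0 → 0 < G c := by
    intro c hc
    set p : MvPolynomial (Fin d) ℝ := ((b.equivFun.symm c : W) : MvPolynomial (Fin d) ℝ)
      with hpdef
    have hp0 : p ≠ 0 := by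
      intro h0
      apply hc
      have h1 : (b.equivFun.symm c : W) = 0 := Subtype.ext h0
      exact b.equivFun.symm.injective (h1.trans (map_zero b.equivFun.symm).symm)
    have hGc : G c = ∫ y in closedBall (0 : EuclideanSpace ℝ (Fin d)) ρ, (eval y p)^2 := by
      rw [hG]; simp only [← key]; rfl
    obtain ⟨x₀, hx₀, hne⟩ : ∃ x₀ ∈ ball (0 : EuclideanSpace ℝ (Fin d)) ρ, eval x₀ p ≠ 0 := by
      by_contra hall
      push_neg at hall
      exact hp0 (eval_eq_zero_of_ball hρ hall)
    set f : EuclideanSpace ℝ (Fin d) → ℝ := fun y => (eval y p)^2 with hf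
    have hfc : Continuous f := (continuous_evalE p).pow 2
    set U : Set (EuclideanSpace ℝ (Fin d)) :=
      {y : EuclideanSpace ℝ (Fin d) | (eval x₀ p)^2/2 < f y} ∩
        ball (0 : EuclideanSpace ℝ (Fin d)) ρ with hU
    have hUopen : IsOpen U := (isOpen_lt continuous_const hfc).inter isOpen_ball
    have hx₀U : x₀ ∈ U := by
      constructor
      · have hpp : 0 < (eval x₀ p)^2 := by positivity
        simpa [hf] using by linarith
      · exact hx₀
    have hUm : 0 < volume U := hUopen.measure_pos volume ⟨x₀, hx₀U⟩
    have hUfin : volume U ≠ ⊤ :=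
      ((measure_mono (Set.inter_subset_right.trans ball_subset_closedBall)).trans_lt
        (isCompact_closedBall _ _).measure_lt_top).ne
    have hstep : (eval x₀ p)^2/2 * (volume U).toReal ≤ ∫ y in U, f y :=
      by have := setIntegral_ge_of_const_le_real hUopen.measurableSet hUfin
          (fun x hx => le_of_lt hx.1)
          ((hfc.continuousOn.integrableOn_compact
              (isCompact_closedBall (0 : EuclideanSpace ℝ (Fin d)) ρ)).mono_set
            (Set.inter_subset_right.trans ball_subset_closedBall))
         exact this
    have hmono : ∫ y in U, f y ≤ ∫ y in closedBall (0 : EuclideanSpace ℝ (Fin d)) ρ, f y :=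
      setIntegral_mono_set (hfc.continuousOn.integrableOn_compact (isCompact_closedBall _ _))
        (Filter.Eventually.of_forall fun y => sq_nonneg _)
        (HasSubset.Subset.eventuallyLE (Set.inter_subset_right.trans ball_subset_closedBall))
    have hpos0 : 0 < (eval x₀ p)^2/2 * (volume U).toReal := by
      have h1 : 0 < (volume U).toReal := ENNReal.toReal_pos hUm.ne' hUfin
      have h2 : 0 < (eval x₀ p)^2 := by positivity
      positivity
    rw [hGc]
    calc (0:ℝ) < (eval x₀ p)^2/2 * (volume U).toReal := hpos0
      _ ≤ ∫ y in U, f y := hstep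
      _ ≤ ∫ y in closedBall (0 : EuclideanSpace ℝ (Fin d)) ρ, f y := hmono
  have hone : (1 : MvPolynomial (Fin d) ℝ) ∈ W := by
    rw [hW, mem_restrictTotalDegree, totalDegree_one]
    exact Nat.zero_le _
  haveI : Nontrivial W := ⟨⟨⟨1, hone⟩, 0, by simp [Subtype.ext_iff]⟩⟩
  have npos : 0 < n := hn ▸ Module.finrank_pos
  haveI : Nonempty (Fin n) := Fin.pos_iff_nonempty.mp npos
  have hSne : (sphere (0 : Fin n → ℝ) 1).Nonempty :=
    NormedSpace.sphere_nonempty.mpr zero_le_one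
  obtain ⟨u, huS, humin⟩ := (isCompact_sphere (0 : Fin n → ℝ) 1).exists_isMinOn hSne
    hGcont.continuousOn
  set m := G u with hm
  have hu0 : u ≠ 0 := by
    intro h0
    rw [h0] at huS
    simp at huS
  have hmpos : 0 < m := hGpos u hu0
  have hlow : ∀ c : Fin n → ℝ, m * ‖c‖^2 ≤ G c := by
    intro c
    rcases eq_or_ne c 0 with rfl | hc
    · have hz : G 0 = 0 := by
        have := hGhom 0 0
        simpa using this
      simp [hz]
    · have hcn : ‖c‖ ≠ 0 := norm_ne_zero_iff.mpr hc
      have huc : ‖c‖⁻¹ • c ∈ sphere (0 : Fin n → ℝ) 1 := by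
        simp [norm_smul, inv_mul_cancel₀ hcn]
      have h1 : m ≤ G (‖c‖⁻¹ • c) := humin huc
      have h2 : G c = ‖c‖^2 * G (‖c‖⁻¹ • c) := by
        rw [← hGhom]
        congr 1
        rw [smul_smul, mul_inv_cancel₀ hcn, one_smul]
      rw [h2]
      have hc2 : (0:ℝ) ≤ ‖c‖^2 := sq_nonneg _
      nlinarith
  have hMex : ∀ i, ∃ M : ℝ, ∀ x ∈ closedBall (0 : EuclideanSpace ℝ (Fin d)) 1, ‖g i x‖ ≤ M :=
    fun i => (isCompact_closedBall (0 : EuclideanSpace ℝ (Fin d)) 1).exists_bound_of_continuousOn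
      (hgc i).continuousOn
  choose M hM using hMex
  set A := ∑ i, M i with hA
  have hMnn : ∀ i, 0 ≤ M i := fun i =>
    (norm_nonneg _).trans (hM i 0 (mem_closedBall_self zero_le_one))
  have hAnn : 0 ≤ A := Finset.sum_nonneg fun i _ => hMnn i
  refine ⟨A^2 / m + 1, by positivity, ?_⟩
  intro p hp x hx
  set c : Fin n → ℝ := b.equivFun ⟨p, (mem_restrictTotalDegree _ _ _).mpr hp⟩ with hc
  have hps : (b.equivFun.symm c : W) = ⟨p, _⟩ := b.equivFun.symm_apply_apply _
  have hEa : ∀ y : EuclideanSpace ℝ (Fin d), eval y p = ∑ i, c i * g i y := by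
    intro y
    rw [← key c y, hps]
  have hGc : G c = ∫ y in closedBall (0 : EuclideanSpace ℝ (Fin d)) ρ, (eval y p)^2 := by
    rw [hG]
    simp only [hEa]
  have habs : |∑ i, c i * g i x| ≤ ‖c‖ * A := by
    calc |∑ i, c i * g i x| ≤ ∑ i, |c i * g i x| := Finset.abs_sum_le_sum_abs _ _
      _ ≤ ∑ i, ‖c‖ * M i := Finset.sum_le_sum fun i _ => by
          rw [abs_mul]
          exact mul_le_mul (norm_le_pi_norm c i) (hM i x hx) (abs_nonneg _)
            (norm_nonneg _)
      _ = ‖c‖ * A := by rw [hA, Finset.mul_sum]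
  have hb2 : (eval x p)^2 ≤ A^2 * ‖c‖^2 := by
    rw [hEa x, ← sq_abs]
    calc |∑ i, c i * g i x|^2 ≤ (‖c‖ * A)^2 := by
          apply pow_le_pow_left₀ (abs_nonneg _) habs
      _ = A^2 * ‖c‖^2 := by ring
  calc (eval x p)^2 ≤ A^2 * ‖c‖^2 := hb2
    _ = (A^2/m) * (m * ‖c‖^2) := by field_simp
    _ ≤ (A^2/m) * G c := by
        apply mul_le_mul_of_nonneg_left (hlow c) (by positivity)
    _ ≤ (A^2/m + 1) * G c := by nlinarith [hGnonneg c]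
    _ = (A^2/m + 1) * ∫ y in closedBall (0 : EuclideanSpace ℝ (Fin d)) ρ, (eval y p)^2 := by
        rw [hGc]

end PoincareSimplexAux

end PoincareAux

open PoincareSimplexAux in
/-- **Poincaré inequality on a shape-regular simplex for polynomials vanishing at a vertex.**
For every dimension `d ≥ 1`, degree bound `l` and shape-regularity parameter `ρ ∈ (0,1]`
there is `C > 0` such that for every `ρ`-shape-regular simplex `τ ⊆ ℝ^d` (the convex hull of
`d+1` affinely independent vertices, containing a closed ball of radius `ρ · diam τ`) and every
polynomial `q` of total degree `≤ l` vanishing at one of the vertices,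
`∫_τ q² ≤ C² (diam τ)² ∫_τ ‖∇q‖²`. -/
theorem poincare_simplex_vanishing_vertex
    (d l : ℕ) (hd : 1 ≤ d) (ρ : ℝ) (hρ : ρ ∈ Set.Ioc (0 : ℝ) 1) :
    ∃ C : ℝ, 0 < C ∧
      ∀ (v : Fin (d + 1) → EuclideanSpace ℝ (Fin d)), AffineIndependent ℝ v →
        ∀ τ : Set (EuclideanSpace ℝ (Fin d)), τ = convexHull ℝ (Set.range v) →
          (∃ z, closedBall z (ρ * diam τ) ⊆ τ) →
          ∀ q : MvPolynomial (Fin d) ℝ, q.totalDegree ≤ l →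
            (∃ i, MvPolynomial.eval (v i) q = 0) →
            ∫ x in τ, (MvPolynomial.eval x q) ^ 2 ≤
              C ^ 2 * (diam τ) ^ 2 *
                ∫ x in τ,
                  ‖gradient (fun y : EuclideanSpace ℝ (Fin d) => MvPolynomial.eval y q) x‖ ^ 2 := by
  obtain ⟨hρ0, hρ1⟩ := hρ
  obtain ⟨K, hKpos, hcrux⟩ := crux (d := d) l hρ0
  have hvol1fin : volume (closedBall (0 : EuclideanSpace ℝ (Fin d)) 1) < ⊤ :=
    (isCompact_closedBall (0 : EuclideanSpace ℝ (Fin d)) 1).measure_lt_top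
  set vol1 := (volume (closedBall (0 : EuclideanSpace ℝ (Fin d)) 1)).toReal with hvol1
  have hvol1pos : 0 < vol1 :=
    ENNReal.toReal_pos (measure_closedBall_pos volume _ one_pos).ne' hvol1fin.ne
  refine ⟨Real.sqrt (4 * K * vol1), Real.sqrt_pos.mpr (by positivity), ?_⟩
  intro v hv τ hτ hball q hq hvan
  obtain ⟨z, hzball⟩ := hball
  obtain ⟨i, hvi⟩ := hvan
  have hCsq : Real.sqrt (4 * K * vol1) ^ 2 = 4 * K * vol1 := Real.sq_sqrt (by positivity)
  have hτc : IsCompact τ := hτ ▸ (Set.finite_range v).isCompact_convexHull ℝ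
  have hτb := hτc.isBounded
  have hmem : ∀ k, v k ∈ τ := fun k => hτ ▸ subset_convexHull ℝ _ (Set.mem_range_self k)
  set h := diam τ with hdiam
  have h01 : (0 : Fin (d+1)) ≠ ⟨1, by omega⟩ := by simp [Fin.ext_iff]
  have hpos : 0 < h :=
    lt_of_lt_of_le (dist_pos.mpr (hv.injective.ne h01))
      (dist_le_diam_of_mem hτb (hmem _) (hmem _))
  have hzτ : z ∈ τ := hzball (mem_closedBall_self (by positivity))
  have hsub1 : τ ⊆ closedBall z h := fun x hx =>
    mem_closedBall.mpr (dist_le_diam_of_mem hτb hx hzτ)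
  set P := bind₁ (fun j : Fin d => C (z j) + C h * X j) q with hP
  have hsdeg : ∀ j : Fin d, ((C (z j) + C h * X j : MvPolynomial (Fin d) ℝ)).totalDegree ≤ 1 := by
    intro j
    refine (totalDegree_add _ _).trans (max_le (by simp [totalDegree_C]) ?_)
    refine (totalDegree_mul _ _).trans ?_
    simp [totalDegree_C, totalDegree_X]
  have hPdeg : P.totalDegree ≤ l := (totalDegree_bind₁_le _ hsdeg q).trans hq
  have hPeval : ∀ u : EuclideanSpace ℝ (Fin d), eval u P = eval (z + h • u) q :=
    eval_bind₁E z h q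
  have hrw : ∫ x in τ, ‖gradient (fun y : EuclideanSpace ℝ (Fin d) => eval y q) x‖ ^ 2 =
      ∫ x in τ, ∑ j, (eval x (pderiv j q)) ^ 2 := by
    refine integral_congr_ae (Filter.Eventually.of_forall fun x => ?_)
    dsimp only
    rw [gradient_eval, norm_pgrad_sq]
  rw [hrw]
  set u₀ : EuclideanSpace ℝ (Fin d) := h⁻¹ • (v i - z) with hu₀
  have hu₀mem : u₀ ∈ closedBall (0 : EuclideanSpace ℝ (Fin d)) 1 := by
    rw [mem_closedBall, dist_eq_norm, sub_zero, hu₀, norm_smul, Real.norm_eq_abs,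
      abs_of_pos (inv_pos.mpr hpos), inv_mul_le_iff₀ hpos, mul_one, ← dist_eq_norm]
    exact dist_le_diam_of_mem hτb (hmem i) hzτ
  have hzu₀ : z + h • u₀ = v i := by
    rw [hu₀, smul_smul, mul_inv_cancel₀ hpos.ne', one_smul]
    abel
  have hPu₀ : eval u₀ P = 0 := by rw [hPeval, hzu₀, hvi]
  set I := ∫ y in closedBall (0 : EuclideanSpace ℝ (Fin d)) ρ,
    ∑ j, (eval y (pderiv j P)) ^ 2 with hI
  have hInn : 0 ≤ I := setIntegral_nonneg measurableSet_closedBall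
    (fun y _ => Finset.sum_nonneg fun j _ => sq_nonneg _)
  have hKI : 0 ≤ K * I := mul_nonneg hKpos.le hInn
  have hIswap : I = ∑ j, ∫ y in closedBall (0 : EuclideanSpace ℝ (Fin d)) ρ,
      (eval y (pderiv j P))^2 := by
    rw [hI]
    exact integral_finset_sum _ fun j _ =>
      (((continuous_evalE _).pow 2).continuousOn.integrableOn_compact (isCompact_closedBall _ _))
  have hgradPbound : ∀ x ∈ closedBall (0 : EuclideanSpace ℝ (Fin d)) 1,
      ‖toDual ℝ (EuclideanSpace ℝ (Fin d)) (pgrad P x)‖ ≤ Real.sqrt (K * I) := by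
    intro x hx
    rw [LinearIsometryEquiv.norm_map, ← Real.sqrt_sq (norm_nonneg _)]
    apply Real.sqrt_le_sqrt
    rw [norm_pgrad_sq]
    calc ∑ j, (eval x (pderiv j P))^2
        ≤ ∑ j, K * ∫ y in closedBall (0 : EuclideanSpace ℝ (Fin d)) ρ,
            (eval y (pderiv j P))^2 :=
          Finset.sum_le_sum fun j _ =>
            hcrux (pderiv j P) ((totalDegree_pderiv_le P j).trans hPdeg) x hx
      _ = K * I := by rw [hIswap, Finset.mul_sum]
  have hmv : ∀ x ∈ closedBall (0 : EuclideanSpace ℝ (Fin d)) 1,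
      (eval x P)^2 ≤ 4 * (K * I) := by
    intro x hx
    have hineq := Convex.norm_image_sub_le_of_norm_hasFDerivWithin_le
      (fun y _ => (hasFDerivAt_eval P y).hasFDerivWithinAt)
      hgradPbound (convex_closedBall (0 : EuclideanSpace ℝ (Fin d)) 1)
      hu₀mem hx
    rw [hPu₀, sub_zero] at hineq
    have hd2 : ‖x - u₀‖ ≤ 2 := by
      have h1 : ‖x‖ ≤ 1 := by simpa [dist_eq_norm] using hx
      have h2 : ‖u₀‖ ≤ 1 := by simpa [dist_eq_norm] using hu₀mem
      calc ‖x - u₀‖ ≤ ‖x‖ + ‖u₀‖ := norm_sub_le _ _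
        _ ≤ 2 := by linarith
    have habs : |eval x P| ≤ Real.sqrt (K*I) * 2 :=
      le_trans hineq (mul_le_mul_of_nonneg_left hd2 (Real.sqrt_nonneg _))
    calc (eval x P)^2 = |eval x P|^2 := (sq_abs _).symm
      _ ≤ (Real.sqrt (K*I) * 2)^2 := pow_le_pow_left₀ (abs_nonneg _) habs 2
      _ = 4 * (K * I) := by rw [mul_pow, Real.sq_sqrt hKI]; ring
  have cov1 := cov (d := d) z hpos (r := 1) (fun x => (eval x q)^2)
  rw [mul_one] at cov1
  have covρ := cov (d := d) z hpos (r := ρ)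
    (fun x => ∑ j, (eval x (pderiv j q))^2)
  have step1 : ∫ x in τ, (eval x q)^2 ≤ ∫ x in closedBall z h, (eval x q)^2 :=
    setIntegral_mono_set
      (((continuous_evalE q).pow 2).continuousOn.integrableOn_compact (isCompact_closedBall _ _))
      (Filter.Eventually.of_forall fun y => sq_nonneg _)
      (HasSubset.Subset.eventuallyLE hsub1)
  have step2 : ∫ u in closedBall (0 : EuclideanSpace ℝ (Fin d)) 1, (eval (z + h • u) q)^2
      = ∫ u in closedBall (0 : EuclideanSpace ℝ (Fin d)) 1, (eval u P)^2 := by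
    refine integral_congr_ae (Filter.Eventually.of_forall fun u => ?_)
    dsimp only
    rw [hPeval]
  have step3 : ∫ u in closedBall (0 : EuclideanSpace ℝ (Fin d)) 1, (eval u P)^2
      ≤ (4 * (K * I)) * vol1 := by
    have hle := setIntegral_mono_on
      (((continuous_evalE P).pow 2).continuousOn.integrableOn_compact (isCompact_closedBall _ _))
      (integrableOn_const hvol1fin.ne)
      measurableSet_closedBall hmv
    rw [setIntegral_const] at hle
    calc ∫ u in closedBall (0 : EuclideanSpace ℝ (Fin d)) 1, (eval u P)^2
        ≤ vol1 • (4 * (K*I)) := hle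
      _ = 4 * (K*I) * vol1 := by rw [smul_eq_mul]; ring
  have hIeq2 : I = h^2 * ∫ u in closedBall (0 : EuclideanSpace ℝ (Fin d)) ρ,
      ∑ j, (eval (z + h • u) (pderiv j q))^2 := by
    rw [hI, ← integral_const_mul]
    refine integral_congr_ae (Filter.Eventually.of_forall fun y => ?_)
    dsimp only
    rw [Finset.mul_sum]
    refine Finset.sum_congr rfl fun j _ => ?_
    rw [hP, pderiv_subst, mul_pow]
  have hIeq : h ^ d * I
      = h^2 * ∫ x in closedBall z (h * ρ), ∑ j, (eval x (pderiv j q))^2 := by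
    rw [hIeq2, covρ]
    ring
  have step4 : ∫ x in closedBall z (h * ρ), ∑ j, (eval x (pderiv j q))^2
      ≤ ∫ x in τ, ∑ j, (eval x (pderiv j q))^2 := by
    have hsubρ : closedBall z (h * ρ) ⊆ τ := by
      rw [mul_comm]
      exact hzball
    refine setIntegral_mono_set ?_
      (Filter.Eventually.of_forall fun y => Finset.sum_nonneg fun j _ => sq_nonneg _)
      (HasSubset.Subset.eventuallyLE hsubρ)
    exact (Continuous.continuousOn
      (continuous_finset_sum _ fun j _ => (continuous_evalE _).pow 2)).integrableOn_compact hτc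
  have hτgradnn : 0 ≤ ∫ x in τ, ∑ j, (eval x (pderiv j q))^2 :=
    setIntegral_nonneg hτc.isClosed.measurableSet
      (fun y _ => Finset.sum_nonneg fun j _ => sq_nonneg _)
  calc ∫ x in τ, (eval x q)^2
      ≤ ∫ x in closedBall z h, (eval x q)^2 := step1
    _ = h ^ d * ∫ u in closedBall (0 : EuclideanSpace ℝ (Fin d)) 1, (eval (z + h • u) q)^2 :=
        cov1
    _ = h ^ d * ∫ u in closedBall (0 : EuclideanSpace ℝ (Fin d)) 1, (eval u P)^2 := by
        rw [step2]
    _ ≤ h ^ d * ((4 * (K * I)) * vol1) :=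
        mul_le_mul_of_nonneg_left step3 (by positivity)
    _ = (4 * K * vol1) * (h ^ d * I) := by ring
    _ = (4 * K * vol1) * (h^2 * ∫ x in closedBall z (h * ρ),
          ∑ j, (eval x (pderiv j q))^2) := by rw [hIeq]
    _ ≤ (4 * K * vol1) * (h^2 * ∫ x in τ, ∑ j, (eval x (pderiv j q))^2) := by
        refine mul_le_mul_of_nonneg_left ?_ (by positivity)
        exact mul_le_mul_of_nonneg_left step4 (by positivity)
    _ = Real.sqrt (4 * K * vol1) ^ 2 * h ^ 2 * ∫ x in τ, ∑ j, (eval x (pderiv j q))^2 := by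
        rw [hCsq]; ring
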